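/- Let G be a linearly ordered abelian group with finite spines, p a prime, {H_i}_{i<κ} a family of convex subgroups with H_i ⊊ H_j whenever i < j, and {e_i}_{i<κ} ⊆ ℕ ∪ {0, ∞}, with the convention H + p^∞G = H. Assume that for every i_0 < κ the index [⋂_{i<κ, i≠i_0}(H_i + p^{e_i}G) : ⋂_{i<κ}(H_i + p^{e_i}G)] is infinite. Then κ ≤ k_p + 1, where k_p is the largest n for which there exist convex subgroups K_0 ⊊ K_1 ⊊ … ⊊ K_{n-1} ⊊ K_n = G with [K_{i+1} : K_i + pK_{i+1}] infinite for every i < n; in particular κ is finite. -/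

import Mathlib

/-- `nH = {n • h : h ∈ H}` as a subgroup. -/
def smulSub {G : Type*} [AddCommGroup G] (n : ℕ) (H : AddSubgroup G) : AddSubgroup G :=
  AddSubgroup.map (n • AddMonoidHom.id G) H

/-- A subgroup `H` of a linearly ordered abelian group is convex if
`0 ≤ g ≤ h` and `h ∈ H` imply `g ∈ H`. -/
def IsConvexSubgroup {G : Type*} [AddCommGroup G] [LinearOrder G] [IsOrderedAddMonoid G] (H : AddSubgroup G) : Prop :=
  ∀ g h : G, 0 ≤ g → g ≤ h → h ∈ H → g ∈ H

/-- `H_n(a)`: the largest convex subgroup `H` of `G` with `a ∉ H + nG` (equivalently the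
union, i.e. supremum, of all such subgroups); it is the trivial subgroup when `a ∈ nG`. -/
def Hsub {G : Type*} [AddCommGroup G] [LinearOrder G] [IsOrderedAddMonoid G] (n : ℕ) (a : G) : AddSubgroup G :=
  sSup {H : AddSubgroup G | IsConvexSubgroup H ∧ a ∉ H ⊔ smulSub n ⊤}

/-- `H + p^e G`, for an exponent `e ∈ ℕ ∪ {∞}`, with the convention `H + p^∞ G = H`. -/
def pPowSup {G : Type*} [AddCommGroup G] (p : ℕ) (H : AddSubgroup G) : ℕ∞ → AddSubgroup G
  | ⊤ => H
  | (m : ℕ) => H ⊔ smulSub (p ^ m) ⊤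

/-- The set of `n : ℕ` for which there are convex subgroups
`K 0 ⊊ K 1 ⊊ … ⊊ K (n-1) ⊊ K n = G` with `[K (i+1) : K i + p K (i+1)]` infinite for all
`i < n`; `k_p` is the largest element of this set. -/
def kpWitness (G : Type*) [AddCommGroup G] [LinearOrder G] [IsOrderedAddMonoid G] (p : ℕ) : Set ℕ :=
  {n : ℕ | ∃ K : ℕ → AddSubgroup G,
    (∀ i ≤ n, IsConvexSubgroup (K i)) ∧ (∀ i j : ℕ, i < j → j ≤ n → K i < K j) ∧
      K n = ⊤ ∧ ∀ i < n, (K i ⊔ smulSub p (K (i + 1))).relIndex (K (i + 1)) = 0}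

section Aux

variable {G : Type*} [AddCommGroup G] [LinearOrder G] [IsOrderedAddMonoid G]

lemma mem_smulSub {n : ℕ} {H : AddSubgroup G} {x : G} :
    x ∈ smulSub n H ↔ ∃ h ∈ H, n • h = x := by
  simp [smulSub, AddSubgroup.mem_map]

lemma smulSub_one (H : AddSubgroup G) : smulSub 1 H = H := by
  ext x; simp [mem_smulSub]

lemma smulSub_dvd_le {a b : ℕ} (h : a ∣ b) (H : AddSubgroup G) :
    smulSub b H ≤ smulSub a H := by
  rcases h with ⟨c, rfl⟩
  intro x hx
  rcases mem_smulSub.1 hx with ⟨y, hy, rfl⟩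
  exact mem_smulSub.2 ⟨c • y, AddSubgroup.nsmul_mem H hy c, by rw [← mul_smul]⟩

lemma smulSub_mono {n : ℕ} {H K : AddSubgroup G} (h : H ≤ K) : smulSub n H ≤ smulSub n K := by
  intro x hx
  rcases mem_smulSub.1 hx with ⟨y, hy, rfl⟩
  exact mem_smulSub.2 ⟨y, h hy, rfl⟩

lemma IsConvexSubgroup.of_nsmul_mem {K : AddSubgroup G} (hK : IsConvexSubgroup K)
    {n : ℕ} (hn : n ≠ 0) {g : G} (h : n • g ∈ K) : g ∈ K := by
  rcases le_or_gt 0 g with hg | hg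
  · have : (1:ℕ) • g ≤ n • g := nsmul_le_nsmul_left hg (by omega)
    exact hK g (n • g) hg (by simpa using this) h
  · have hg' : 0 ≤ -g := neg_nonneg.2 hg.le
    have h' : n • (-g) ∈ K := by rw [smul_neg]; exact K.neg_mem h
    have : (1:ℕ) • (-g) ≤ n • (-g) := nsmul_le_nsmul_left hg' (by omega)
    have := hK (-g) (n • (-g)) hg' (by simpa using this) h'
    simpa using K.neg_mem this

/-- any two convex subgroups are comparable -/
lemma IsConvexSubgroup.comparable {H K : AddSubgroup G} (hH : IsConvexSubgroup H)
    (hK : IsConvexSubgroup K) : H ≤ K ∨ K ≤ H := by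
  by_contra hc
  push_neg at hc
  obtain ⟨h1, h2⟩ := hc
  obtain ⟨h, hhH, hhK⟩ := SetLike.not_le_iff_exists.1 h1
  obtain ⟨k, hkK, hkH⟩ := SetLike.not_le_iff_exists.1 h2
  have habs : ∀ (L : AddSubgroup G) (x : G), x ∈ L ↔ |x| ∈ L := by
    intro L x
    rcases abs_choice x with h | h
    · rw [h]
    · rw [h]; exact neg_mem_iff.symm
  rcases le_total |h| |k| with hle | hle
  · exact hhK ((habs K h).2 (hK |h| |k| (abs_nonneg h) hle ((habs K k).1 hkK)))
  · exact hkH ((habs H k).2 (hH |k| |h| (abs_nonneg k) hle ((habs H h).1 hhH)))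

/-- The key layer lemma: if `H ≤ K` are convex and `[K + p^m G : H + p^m G]` is
infinite, then `[K : H + pK]` is infinite. -/
lemma main_layer {p : ℕ} (hp : 1 ≤ p) {H K : AddSubgroup G} (hK : IsConvexSubgroup K)
    (hHK : H ≤ K) (m : ℕ)
    (hrel : (H ⊔ smulSub (p ^ m) ⊤).relIndex (K ⊔ smulSub (p ^ m) ⊤) = 0) :
    (H ⊔ smulSub p K).relIndex K = 0 := by
  by_contra hn
  set C : AddSubgroup G := K ⊔ smulSub (p ^ m) ⊤ with hC
  set D : ℕ → AddSubgroup G := fun j => (H ⊔ smulSub (p ^ j) ⊤) ⊓ C with hD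
  have hKC : K ≤ C := le_sup_left
  have Dle : ∀ a b : ℕ, a ≤ b → D b ≤ D a := by
    intro a b hab
    exact inf_le_inf_right _ (sup_le_sup_left (smulSub_dvd_le (pow_dvd_pow p hab) ⊤) _)
  have hD0 : D 0 = C := by
    simp only [hD, pow_zero, smulSub_one]
    rw [sup_top_eq, top_inf_eq]
  have hsrc : Finite (↥K ⧸ (H ⊔ smulSub p K).addSubgroupOf K) :=
    Nat.finite_of_card_ne_zero hn
  have layer : ∀ j : ℕ, j + 1 ≤ m → (D (j + 1)).relIndex (D j) ≠ 0 := by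
    intro j hjm
    have hpj : p ^ j ≠ 0 := by positivity
    have hmem : ∀ x : ↥K, p ^ j • (x : G) ∈ D j := by
      intro x
      refine ⟨AddSubgroup.mem_sup_right (mem_smulSub.2 ⟨(x : G), trivial, rfl⟩),
        hKC (K.nsmul_mem x.2 _)⟩
    let φ : ↥K →+ ↥(D j) :=
      { toFun := fun x => ⟨p ^ j • (x : G), hmem x⟩
        map_zero' := by ext; simp
        map_add' := by intro a b; ext; simp [smul_add] }
    let N := (D (j + 1)).addSubgroupOf (D j)
    let ψ : ↥K →+ ↥(D j) ⧸ N := (QuotientAddGroup.mk' N).comp φ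
    have hker : (H ⊔ smulSub p K).addSubgroupOf K ≤ ψ.ker := by
      intro x hx
      rcases AddSubgroup.mem_sup.1 hx with ⟨h, hh, z, hz, hsum⟩
      rcases mem_smulSub.1 hz with ⟨y, hyK, rfl⟩
      have hx' : (x : G) = h + p • y := hsum.symm
      have : (φ x : G) ∈ D (j + 1) := by
        constructor
        · have hcomp : p ^ j • (x : G) = p ^ j • h + p ^ (j + 1) • y := by
            rw [hx', smul_add, ← mul_smul, ← pow_succ]
          rw [show (φ x : G) = p ^ j • (x : G) from rfl, hcomp]
          exact AddSubgroup.add_mem _ (AddSubgroup.mem_sup_left (H.nsmul_mem hh _))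
            (AddSubgroup.mem_sup_right (mem_smulSub.2 ⟨y, trivial, rfl⟩))
        · exact hKC (K.nsmul_mem x.2 _)
      simp only [ψ, AddMonoidHom.mem_ker, AddMonoidHom.comp_apply, QuotientAddGroup.mk'_apply,
        QuotientAddGroup.eq_zero_iff]
      exact this
    have hsurj : Function.Surjective (QuotientAddGroup.lift _ ψ hker) := by
      intro q
      obtain ⟨d, rfl⟩ := QuotientAddGroup.mk_surjective q
      obtain ⟨hd1, hd2⟩ := d.2
      rcases AddSubgroup.mem_sup.1 hd1 with ⟨h, hh, z, hz, hsum⟩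
      rcases mem_smulSub.1 hz with ⟨g, -, rfl⟩
      have hzC : p ^ j • g ∈ C := by
        have : p ^ j • g = (d : G) - h := by rw [← hsum]; abel
        rw [this]
        exact C.sub_mem hd2 (hKC (hHK hh))
      rcases AddSubgroup.mem_sup.1 hzC with ⟨k, hkK, w, hw, hsum2⟩
      rcases mem_smulSub.1 hw with ⟨g', -, rfl⟩
      have hxK : g - p ^ (m - j) • g' ∈ K := by
        apply hK.of_nsmul_mem hpj
        have : p ^ j • (g - p ^ (m - j) • g') = k := by
          rw [smul_sub, ← mul_smul, ← pow_add]
          rw [show j + (m - j) = m by omega, ← hsum2]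
          abel
        rw [this]; exact hkK
      refine ⟨QuotientAddGroup.mk ⟨g - p ^ (m - j) • g', hxK⟩, ?_⟩
      rw [QuotientAddGroup.lift_mk]
      simp only [ψ, AddMonoidHom.comp_apply, QuotientAddGroup.mk'_apply]
      rw [QuotientAddGroup.eq]
      have hdiff : -(φ ⟨g - p ^ (m - j) • g', hxK⟩ : G) + (d : G) ∈ D (j + 1) := by
        have hval : (φ ⟨g - p ^ (m - j) • g', hxK⟩ : G) = p ^ j • g - p ^ m • g' := by
          show p ^ j • (g - p ^ (m - j) • g') = _
          rw [smul_sub, ← mul_smul, ← pow_add, show j + (m - j) = m by omega]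
        rw [hval]
        have heq : -(p ^ j • g - p ^ m • g') + (d : G) = h + p ^ m • g' := by
          rw [← hsum]; abel
        rw [heq]
        constructor
        · apply AddSubgroup.add_mem
          · exact AddSubgroup.mem_sup_left hh
          · apply AddSubgroup.mem_sup_right
            exact smulSub_dvd_le (pow_dvd_pow p (by omega : j + 1 ≤ m)) ⊤
              (mem_smulSub.2 ⟨g', trivial, rfl⟩)
        · exact C.add_mem (hKC (hHK hh)) (AddSubgroup.mem_sup_right
            (mem_smulSub.2 ⟨g', trivial, rfl⟩))
      exact hdiff
    have hfin : Finite (↥(D j) ⧸ N) := Finite.of_surjective _ hsurj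
    have hcard : (D (j + 1)).relIndex (D j) = Nat.card (↥(D j) ⧸ N) := rfl
    rw [hcard]
    exact Nat.card_ne_zero.2 ⟨⟨0⟩, hfin⟩
  have chainlem : ∀ d : ℕ, d ≤ m → (D m).relIndex (D (m - d)) ≠ 0 := by
    intro d
    induction d with
    | zero =>
      intro _
      simp only [Nat.sub_zero, AddSubgroup.relIndex_self]
      exact Nat.one_ne_zero
    | succ d ih =>
      intro hdm
      have h1 : m - d = (m - (d + 1)) + 1 := by omega
      have hmul := AddSubgroup.relIndex_mul_relIndex (D m) (D (m - d)) (D (m - (d + 1)))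
        (Dle _ _ (by omega)) (Dle _ _ (by omega))
      rw [← hmul]
      apply Nat.mul_ne_zero (ih (by omega))
      have := layer (m - (d + 1)) (by omega)
      rwa [← h1] at this
  have hne : (D m).relIndex (D 0) ≠ 0 := by
    have := chainlem m le_rfl
    rwa [Nat.sub_self] at this
  rw [hD0] at hne
  have : (D m).relIndex C = (H ⊔ smulSub (p ^ m) ⊤).relIndex C :=
    AddSubgroup.inf_relIndex_right _ _
  rw [this, hrel] at hne
  exact hne rfl

lemma top_convex : IsConvexSubgroup (⊤ : AddSubgroup G) := fun _ _ _ _ _ => trivial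

lemma zero_mem_kpWitness (p : ℕ) : 0 ∈ kpWitness G p :=
  ⟨fun _ => ⊤, fun _ _ => top_convex, fun i j hij hj => by omega, rfl, fun i hi => by omega⟩

lemma not_mem_Hsub {p : ℕ} {a : G} {K : AddSubgroup G} (hK : IsConvexSubgroup K)
    (ha : a ∉ K ⊔ smulSub p ⊤) : a ∉ Hsub p a := by
  intro hmem
  have hdir : DirectedOn (· ≤ ·)
      {H : AddSubgroup G | IsConvexSubgroup H ∧ a ∉ H ⊔ smulSub p ⊤} := by
    intro H1 h1 H2 h2
    rcases h1.1.comparable h2.1 with h | h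
    · exact ⟨H2, h2, h, le_refl _⟩
    · exact ⟨H1, h1, le_refl _, h⟩
  have hne : {H : AddSubgroup G | IsConvexSubgroup H ∧ a ∉ H ⊔ smulSub p ⊤}.Nonempty :=
    ⟨K, hK, ha⟩
  rw [Hsub, AddSubgroup.mem_sSup_of_directedOn hne hdir] at hmem
  obtain ⟨H, hH, haH⟩ := hmem
  exact hH.2 (AddSubgroup.mem_sup_left haH)

/-- any element of `kpWitness` is at most the size of the `p`-spine. -/
lemma kpWitness_le (p : ℕ) (hp : 1 ≤ p)
    (hfs : {H : AddSubgroup G | ∃ a : G, H = Hsub p a}.Finite) :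
    ∀ n ∈ kpWitness G p, n ≤ hfs.toFinset.card := by
  intro n hn
  obtain ⟨K, hconv, hmono, htop, hlayer⟩ := hn
  have key : ∀ i : Fin n, ∃ a : G, a ∈ K (i + 1) ∧ a ∉ K i ⊔ smulSub p ⊤ ∧
      a ∉ Hsub p a ∧ K i ≤ Hsub p a := by
    intro ⟨i, hi⟩
    simp only []
    have hrel := hlayer i hi
    have hne : ¬ (K (i + 1) ≤ K i ⊔ smulSub p (K (i + 1))) := by
      intro hle
      rw [AddSubgroup.relIndex, AddSubgroup.addSubgroupOf_eq_top.2 hle,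
        AddSubgroup.index_top] at hrel
      exact one_ne_zero hrel
    obtain ⟨a, haK, ha⟩ := SetLike.not_le_iff_exists.1 hne
    have hKle : K i ≤ K (i + 1) := (hmono i (i + 1) (by omega) (by omega)).le
    have hnot : a ∉ K i ⊔ smulSub p ⊤ := by
      intro hmem
      rcases AddSubgroup.mem_sup.1 hmem with ⟨c, hc, z, hz, hsum⟩
      rcases mem_smulSub.1 hz with ⟨g, -, rfl⟩
      have hpg : p • g ∈ K (i + 1) := by
        have : p • g = a - c := by rw [← hsum]; abel
        rw [this]
        exact (K (i + 1)).sub_mem haK (hKle hc)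
      have hgK : g ∈ K (i + 1) :=
        (hconv (i + 1) (by omega)).of_nsmul_mem (by omega) hpg
      apply ha
      rw [← hsum]
      exact AddSubgroup.add_mem _ (AddSubgroup.mem_sup_left hc)
        (AddSubgroup.mem_sup_right (mem_smulSub.2 ⟨g, hgK, rfl⟩))
    exact ⟨a, haK, hnot, not_mem_Hsub (hconv i (by omega)) hnot,
      le_sSup ⟨hconv i (by omega), hnot⟩⟩
  choose a ha₁ ha₂ ha₃ ha₄ using key
  have hinj : Function.Injective (fun i : Fin n => Hsub p (a i)) := by
    have hlt : ∀ i j : Fin n, (i : ℕ) < j → Hsub p (a i) ≠ Hsub p (a j) := by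
      intro i j hij heq
      have h1 : K ((i : ℕ) + 1) ≤ K (j : ℕ) := by
        rcases eq_or_lt_of_le (by omega : (i : ℕ) + 1 ≤ (j : ℕ)) with h | h
        · rw [h]
        · exact (hmono _ _ h (by omega)).le
      exact (ha₃ i) (by rw [heq]; exact (ha₄ j) (h1 (ha₁ i)))
    intro i j heq
    rcases lt_trichotomy (i : ℕ) (j : ℕ) with h | h | h
    · exact absurd heq (hlt i j h)
    · exact Fin.ext h
    · exact absurd heq.symm (hlt j i h)
  calc n = (Finset.univ : Finset (Fin n)).card := by simp
    _ ≤ hfs.toFinset.card := by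
        apply Finset.card_le_card_of_injOn (fun i => Hsub p (a i))
        · intro i _
          show Hsub p (a i) ∈ hfs.toFinset
          simp only [Set.Finite.mem_toFinset]
          exact ⟨a i, rfl⟩
        · exact hinj.injOn

lemma pPowSup_coe (p : ℕ) (H : AddSubgroup G) (m : ℕ) :
    pPowSup p H (m : ℕ∞) = H ⊔ smulSub (p ^ m) ⊤ := rfl

lemma pPowSup_le {p : ℕ} {H K : AddSubgroup G} (hHK : H ≤ K) {e f : ℕ∞} (hfe : f ≤ e) :
    pPowSup p H e ≤ pPowSup p K f := by
  cases f with
  | top =>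
    have : e = ⊤ := top_le_iff.1 hfe
    subst this
    exact hHK
  | coe mf =>
    cases e with
    | top =>
      calc pPowSup p H ⊤ = H := rfl
        _ ≤ K := hHK
        _ ≤ pPowSup p K (mf : ℕ∞) := le_sup_left
    | coe me =>
      rw [pPowSup_coe, pPowSup_coe]
      have hle : mf ≤ me := by exact_mod_cast hfe
      exact sup_le_sup hHK (smulSub_dvd_le (pow_dvd_pow p hle) ⊤)

end Aux

/-- Let `G` be a linearly ordered abelian group with finite spines, `p` a prime,
`(H i)_{i : ι}` a strictly increasing family of convex subgroups and `(e i)_{i : ι}`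
exponents in `ℕ ∪ {0, ∞}` (with `H + p^∞ G = H`) such that for every `i₀` the index
`[⋂_{i ≠ i₀} (H i + p^(e i) G) : ⋂_i (H i + p^(e i) G)]` is infinite.  Then `κ ≤ k_p + 1`
where `κ` is the cardinality of `ι` and `k_p` is the greatest element of `kpWitness G p`;
in particular `κ` is finite. -/
theorem card_le_kp_add_one_of_infinite_relindex_family {G : Type*}
    [AddCommGroup G] [LinearOrder G] [IsOrderedAddMonoid G]
    (hfs : ∀ q : ℕ, q.Prime → {H : AddSubgroup G | ∃ a : G, H = Hsub q a}.Finite)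
    (p : ℕ) (hp : p.Prime)
    {ι : Type*} [LinearOrder ι]
    (H : ι → AddSubgroup G) (hconv : ∀ i, IsConvexSubgroup (H i))
    (hchain : ∀ i j : ι, i < j → H i < H j)
    (e : ι → ℕ∞)
    (hinf : ∀ i₀ : ι,
      (⨅ i : ι, pPowSup p (H i) (e i)).relIndex
        (⨅ (i : ι) (_ : i ≠ i₀), pPowSup p (H i) (e i)) = 0) :
    Finite ι ∧ ∃ kp : ℕ, IsGreatest (kpWitness G p) kp ∧ Nat.card ι ≤ kp + 1 := by
  have hp1 : 1 ≤ p := hp.one_lt.le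
  set A : ι → AddSubgroup G := fun i => pPowSup p (H i) (e i) with hA
  -- splitting the infimum
  have hsplit : ∀ t : ι, (⨅ i, A i) = A t ⊓ ⨅ (i) (_ : i ≠ t), A i := by
    intro t
    apply le_antisymm
    · exact le_inf (iInf_le _ t) (le_iInf fun i => le_iInf fun _ => iInf_le _ i)
    · apply le_iInf
      intro i
      by_cases h : i = t
      · subst h; exact inf_le_left
      · exact le_trans inf_le_right (iInf_le_of_le i (iInf_le _ h))
  -- the exponents are strictly increasing
  have elt : ∀ a b : ι, a < b → e a < e b := by
    intro a b hab
    by_contra hle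
    push_neg at hle
    have hAB : A a ≤ A b := pPowSup_le (hchain a b hab).le hle
    have heq : (⨅ i, A i) = (⨅ (i) (_ : i ≠ b), A i) := by
      apply le_antisymm
      · exact le_iInf fun i => le_iInf fun _ => iInf_le _ i
      · apply le_iInf
        intro i
        by_cases h : i = b
        · subst h
          exact le_trans (iInf_le_of_le a (iInf_le _ hab.ne))
            hAB
        · exact iInf_le_of_le i (iInf_le _ h)
    have := hinf b
    rw [← heq, AddSubgroup.relIndex_self] at this
    exact one_ne_zero this
  -- the main step lemma: derived infinite layers
  have step : ∀ t s : ι, t < s → ∀ K : AddSubgroup G, IsConvexSubgroup K → H s ≤ K →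
      (H t ⊔ smulSub p K).relIndex K = 0 := by
    intro t s hts K hKc hsK
    have htK : H t ≤ K := (hchain t s hts).le.trans hsK
    have htne : e t ≠ ⊤ := fun h => by
      have := elt t s hts
      rw [h] at this
      exact (not_top_lt this)
    set m := (e t).toNat with hm
    have hcoe : ((m : ℕ∞)) = e t := ENat.coe_toNat htne
    have h1 : (A t).relIndex (⨅ (i) (_ : i ≠ t), A i) = 0 := by
      have h0 := hinf t
      rw [hsplit t] at h0
      rwa [AddSubgroup.inf_relIndex_right] at h0
    have hBC : (⨅ (i) (_ : i ≠ t), A i) ≤ K ⊔ smulSub (p ^ m) ⊤ := by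
      have h2 : (⨅ (i) (_ : i ≠ t), A i) ≤ A s :=
        iInf_le_of_le s (iInf_le _ hts.ne')
      have h3 : A s ≤ pPowSup p K (m : ℕ∞) := by
        apply pPowSup_le hsK
        rw [hcoe]
        exact (elt t s hts).le
      rw [pPowSup_coe] at h3
      exact h2.trans h3
    have h2 : (A t).relIndex (K ⊔ smulSub (p ^ m) ⊤) = 0 :=
      AddSubgroup.relIndex_eq_zero_of_le_right hBC h1
    have hAt : A t = H t ⊔ smulSub (p ^ m) ⊤ := by
      rw [hA]
      simp only []
      rw [← hcoe, pPowSup_coe]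
    rw [hAt] at h2
    exact main_layer hp1 hKc htK m h2
  -- main chain construction
  have chain_mem : ∀ (k : ℕ) (f : Fin (k + 1) → ι), StrictMono f → k ∈ kpWitness G p := by
    intro k f hf
    rcases Nat.eq_zero_or_pos k with rfl | hk
    · exact zero_mem_kpWitness p
    have hfle : ∀ i j : Fin (k + 1), (i : ℕ) ≤ (j : ℕ) → H (f i) ≤ H (f j) := by
      intro i j hij
      rcases eq_or_lt_of_le hij with h | h
      · rw [Fin.ext h]
      · exact (hchain _ _ (hf (by exact h))).le
    -- top group is not everything
    have htopne : H (f ⟨k - 1, by omega⟩) ≠ ⊤ := by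
      intro hEq
      have hrel := step (f ⟨k - 1, by omega⟩) (f ⟨k, by omega⟩)
        (hf (by simp [Fin.lt_def]; omega)) ⊤ top_convex le_top
      rw [AddSubgroup.relIndex_top_right, hEq, top_sup_eq, AddSubgroup.index_top] at hrel
      exact one_ne_zero hrel
    refine ⟨fun j => if h : j < k then H (f ⟨j, by omega⟩) else ⊤, ?_, ?_, ?_, ?_⟩
    · intro i hi
      by_cases h : i < k
      · simpa [h] using hconv _
      · simpa [h] using top_convex
    · intro i j hij hj
      by_cases h : j < k
      · have hi : i < k := by omega
        simp only [dif_pos h, dif_pos hi]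
        exact hchain _ _ (hf (by simp [Fin.lt_def]; omega))
      · have hjk : j = k := by omega
        have hi : i < k := by omega
        simp only [dif_pos hi, dif_neg h]
        apply lt_top_iff_ne_top.2
        intro hEq
        apply htopne
        apply top_le_iff.1
        rw [← hEq]
        exact hfle ⟨i, by omega⟩ ⟨k - 1, by omega⟩ (by simp; omega)
    · simp
    · intro i hi
      by_cases h : i + 1 < k
      · simp only [dif_pos h, dif_pos (by omega : i < k)]
        exact step (f ⟨i, by omega⟩) (f ⟨i + 1, by omega⟩)
          (hf (by simp [Fin.lt_def])) _ (hconv _) (le_refl _)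
      · have hik : i + 1 = k := by omega
        simp only [dif_neg (by omega : ¬ i + 1 < k), dif_pos (by omega : i < k)]
        exact step (f ⟨i, by omega⟩) (f ⟨k, by omega⟩)
          (hf (by simp [Fin.lt_def]; omega)) ⊤ top_convex le_top
  -- existence of the greatest element
  have hbdd : BddAbove (kpWitness G p) := ⟨(hfs p hp).toFinset.card, fun n hn =>
    kpWitness_le p hp1 (hfs p hp) n hn⟩
  have hne : (kpWitness G p).Nonempty := ⟨0, zero_mem_kpWitness p⟩
  set kp := sSup (kpWitness G p) with hkp
  have hgreat : IsGreatest (kpWitness G p) kp :=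
    ⟨Nat.sSup_mem hne hbdd, fun b hb => le_csSup hbdd hb⟩
  -- finiteness
  have hfinite : Finite ι := by
    by_contra hinfι
    rw [not_finite_iff_infinite] at hinfι
    obtain ⟨s, hs⟩ := Infinite.exists_subset_card_eq ι (kp + 2)
    have hiso := s.orderIsoOfFin hs
    have hmem : (kp + 1) ∈ kpWitness G p := by
      apply chain_mem (kp + 1) (fun i => (hiso i : ι))
      intro i j hij
      exact Subtype.coe_lt_coe.2 (hiso.strictMono hij)
    have := hgreat.2 hmem
    omega
  refine ⟨hfinite, kp, hgreat, ?_⟩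
  -- cardinality bound
  haveI := Fintype.ofFinite ι
  rcases Nat.eq_zero_or_pos (Nat.card ι) with h0 | hpos
  · omega
  have hcard : (Finset.univ : Finset ι).card = Nat.card ι := by
    rw [Nat.card_eq_fintype_card]; exact Finset.card_univ
  have hk1 : Nat.card ι - 1 + 1 = Nat.card ι := by omega
  have hiso := Finset.orderIsoOfFin (Finset.univ : Finset ι)
    (by rw [hcard, hk1] : (Finset.univ : Finset ι).card = Nat.card ι - 1 + 1)
  have hmem : (Nat.card ι - 1) ∈ kpWitness G p := by
    apply chain_mem (Nat.card ι - 1) (fun i => (hiso i : ι))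
    intro i j hij
    exact Subtype.coe_lt_coe.2 (hiso.strictMono hij)
  have := hgreat.2 hmem
  omega
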